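/- For any μ > 0 and α ∈ ℝ there is a constant C (depending on μ and α) such that for all n ∈ ℕ, ∑_{m=0}^∞ (max(m,1))^α · exp(-μ·|√m − √n|) ≤ C · (max(n,1))^{α + 1/2}. -/

import Mathlib

open Real

private lemma exp_pow_bound {x : ℝ} (hx : 0 < x) : Real.exp (-x) ≤ 256 / x ^ 4 := by
  have h1 : x / 4 ≤ Real.exp (x / 4) := by
    have := Real.add_one_le_exp (x / 4); linarith
  have h2 : (x / 4) ^ 4 ≤ Real.exp (x / 4) ^ 4 := pow_le_pow_left₀ (by positivity) h1 4
  have h3 : Real.exp (x / 4) ^ 4 = Real.exp x := by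
    rw [← Real.exp_nat_mul]; ring_nf
  have h4 : x ^ 4 / 256 ≤ Real.exp x := by
    rw [← h3]
    calc x ^ 4 / 256 = (x / 4) ^ 4 := by ring
      _ ≤ _ := h2
  rw [Real.exp_neg]
  calc (Real.exp x)⁻¹ ≤ (x ^ 4 / 256)⁻¹ := by
        apply inv_anti₀ (by positivity) h4
    _ = 256 / x ^ 4 := by rw [inv_div]

private lemma summable_exp_neg_sqrt {c : ℝ} (hc : 0 < c) :
    Summable fun k : ℕ => Real.exp (-(c * Real.sqrt k)) := by
  rw [← summable_nat_add_iff 1]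
  refine Summable.of_nonneg_of_le (f := fun k : ℕ => 256 / c ^ 4 * (1 / ((k : ℝ) + 1) ^ 2))
    (fun k => (Real.exp_pos _).le) (fun k => ?_) ?_
  · 
    have hk : (0 : ℝ) < ((k : ℝ) + 1) := by positivity
    have hs : (0 : ℝ) < Real.sqrt ((k : ℕ) + 1 : ℕ) := by
      apply Real.sqrt_pos.mpr; push_cast; positivity
    have hx : 0 < c * Real.sqrt ((k : ℕ) + 1 : ℕ) := mul_pos hc hs
    calc Real.exp (-(c * Real.sqrt ((k : ℕ) + 1 : ℕ))) ≤ 256 / (c * Real.sqrt ((k:ℕ)+1:ℕ)) ^ 4 :=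
          exp_pow_bound hx
      _ = 256 / c ^ 4 * (1 / ((k : ℝ) + 1) ^ 2) := by
          have : (Real.sqrt ((k:ℕ)+1:ℕ)) ^ 4 = ((k : ℝ) + 1) ^ 2 := by
            have h0 : (0:ℝ) ≤ ((k:ℕ)+1:ℕ) := by positivity
            have := Real.sq_sqrt h0
            push_cast at this ⊢
            nlinarith [Real.sqrt_nonneg ((k:ℝ)+1)]
          rw [mul_pow, this]
          field_simp
  · apply Summable.mul_left
    have : Summable fun k : ℕ => 1 / ((k : ℝ)) ^ 2 := Real.summable_one_div_nat_pow.mpr one_lt_two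
    have := (summable_nat_add_iff 1).mpr this
    simpa using this

private lemma sqrt_max' (x : ℝ) : Real.sqrt (max x 1) = max (Real.sqrt x) 1 := by
  rcases le_total x 1 with h | h
  · rw [max_eq_right h, max_eq_right, Real.sqrt_one]
    calc Real.sqrt x ≤ Real.sqrt 1 := Real.sqrt_le_sqrt h
      _ = 1 := Real.sqrt_one
  · rw [max_eq_left h, max_eq_left]
    calc (1:ℝ) = Real.sqrt 1 := Real.sqrt_one.symm
      _ ≤ Real.sqrt x := Real.sqrt_le_sqrt h

private lemma geom_inv_bound {x : ℝ} (hx : 0 < x) : (1 - Real.exp (-x))⁻¹ ≤ 1 + x⁻¹ := by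
  have h1 : Real.exp (-x) ≤ (1 + x)⁻¹ := by
    rw [Real.exp_neg]
    apply inv_anti₀ (by linarith) (Real.add_one_le_exp x |>.trans_eq' (by ring))
  have h2 : x / (1 + x) ≤ 1 - Real.exp (-x) := by
    have : (1:ℝ) - (1+x)⁻¹ = x / (1+x) := by field_simp; ring
    linarith [this ▸ sub_le_sub_left h1 1]
  have h3 : 0 < x / (1 + x) := by positivity
  calc (1 - Real.exp (-x))⁻¹ ≤ (x / (1+x))⁻¹ := inv_anti₀ h3 h2
    _ = (1+x)/x := by rw [inv_div]
    _ = 1 + x⁻¹ := by field_simp; ring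

private lemma le_mul_exp_aux {ε a b d : ℝ} (hε0 : 0 < ε) (hε1 : ε ≤ 1) (hb : 1 ≤ b)
    (hd0 : 0 ≤ d) (h : a ≤ b + d) : a ≤ b * (ε⁻¹ * Real.exp (ε * d)) := by
  have he : 1 + ε * d ≤ Real.exp (ε * d) := by
    have := Real.add_one_le_exp (ε * d); linarith
  have h1 : (1 + d) ≤ ε⁻¹ * Real.exp (ε * d) := by
    have hi : ε⁻¹ * (1 + ε * d) = ε⁻¹ + d := by field_simp
    have : ε⁻¹ * (1 + ε * d) ≤ ε⁻¹ * Real.exp (ε * d) :=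
      mul_le_mul_of_nonneg_left he (by positivity)
    have hε' : (1:ℝ) ≤ ε⁻¹ := by nlinarith [inv_pos.mpr hε0, mul_inv_cancel₀ hε0.ne']
    linarith [hi ▸ this]
  calc a ≤ b + d := h
    _ ≤ b * (1 + d) := by nlinarith
    _ ≤ b * (ε⁻¹ * Real.exp (ε * d)) := mul_le_mul_of_nonneg_left h1 (by linarith)

private lemma rpow_comp {α ε a b d : ℝ} (hε0 : 0 < ε) (hε1 : ε ≤ 1) (ha : 1 ≤ a) (hb : 1 ≤ b)
    (hd : |a - b| ≤ d) :
    a ^ (2*α) ≤ ε ^ (-(2 * |α|)) * b ^ (2*α) * Real.exp (2 * |α| * ε * d) := by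
  have hd0 : 0 ≤ d := le_trans (abs_nonneg _) hd
  have ha0 : (0:ℝ) < a := by linarith
  have hb0 : (0:ℝ) < b := by linarith
  rcases le_or_gt 0 α with hα | hα
  · have habs : |α| = α := abs_of_nonneg hα
    have hab : a ≤ b + d := by obtain ⟨u,v⟩ := abs_sub_le_iff.mp hd; linarith
    have key : a ≤ b * (ε⁻¹ * Real.exp (ε * d)) := le_mul_exp_aux hε0 hε1 hb hd0 hab
    have h2 : a ^ (2*α) ≤ (b * (ε⁻¹ * Real.exp (ε * d))) ^ (2*α) :=
      Real.rpow_le_rpow ha0.le key (by positivity)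
    rw [habs]
    calc a ^ (2*α) ≤ (b * (ε⁻¹ * Real.exp (ε * d))) ^ (2*α) := h2
      _ = ε ^ (-(2*α)) * b ^ (2*α) * Real.exp (2*α*ε*d) := by
        rw [Real.mul_rpow hb0.le (by positivity),
          Real.mul_rpow (by positivity) (Real.exp_pos _).le,
          ← Real.exp_mul, Real.inv_rpow hε0.le, ← Real.rpow_neg hε0.le]
        ring_nf
  · have habs : |α| = -α := abs_of_neg hα
    have hab : b ≤ a + d := by obtain ⟨u,v⟩ := abs_sub_le_iff.mp hd; linarith
    have key : b ≤ a * (ε⁻¹ * Real.exp (ε * d)) := le_mul_exp_aux hε0 hε1 ha hd0 hab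
    have key2 : b * (ε * Real.exp (-(ε * d))) ≤ a := by
      rw [Real.exp_neg]
      have hX : (0:ℝ) < ε * (Real.exp (ε * d))⁻¹ := by positivity
      have h1 := mul_le_mul_of_nonneg_right key hX.le
      have h2 : a * (ε⁻¹ * Real.exp (ε * d)) * (ε * (Real.exp (ε * d))⁻¹) = a := by
        field_simp
      rw [h2] at h1
      exact h1
    have hpos2 : (0:ℝ) < b * (ε * Real.exp (-(ε * d))) := by positivity
    have h2 : a ^ (2*α) ≤ (b * (ε * Real.exp (-(ε * d)))) ^ (2*α) :=
      Real.rpow_le_rpow_of_nonpos hpos2 key2 (by linarith)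
    rw [habs]
    calc a ^ (2*α) ≤ (b * (ε * Real.exp (-(ε * d)))) ^ (2*α) := h2
      _ = ε ^ (-(2*(-α))) * b ^ (2*α) * Real.exp (2*(-α)*ε*d) := by
        rw [Real.mul_rpow hb0.le (by positivity), Real.mul_rpow hε0.le (Real.exp_pos _).le,
          ← Real.exp_mul, show (-(2*(-α))) = 2*α by ring]
        ring_nf

private lemma dist_low (n m : ℕ) (h : m ≤ n) :
    ((n - m : ℕ) : ℝ) / (3 * Real.sqrt (max (n:ℝ) 1)) ≤ |Real.sqrt m - Real.sqrt n| := by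
  have hc : ((n - m : ℕ) : ℝ) = (n : ℝ) - m := by
    push_cast [h]; ring
  have hsm : Real.sqrt m ≤ Real.sqrt n := Real.sqrt_le_sqrt (by exact_mod_cast h)
  have hsN : Real.sqrt n ≤ Real.sqrt (max (n:ℝ) 1) := Real.sqrt_le_sqrt (le_max_left _ _)
  have h1N : (1:ℝ) ≤ Real.sqrt (max (n:ℝ) 1) := by
    rw [show (1:ℝ) = Real.sqrt 1 from Real.sqrt_one.symm]
    exact Real.sqrt_le_sqrt (by simp)
  have hm2 : Real.sqrt m ^ 2 = (m:ℝ) := Real.sq_sqrt (by positivity)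
  have hn2 : Real.sqrt n ^ 2 = (n:ℝ) := Real.sq_sqrt (by positivity)
  have habs : |Real.sqrt m - Real.sqrt n| = Real.sqrt n - Real.sqrt m := by
    rw [abs_sub_comm, abs_of_nonneg (by linarith)]
  rw [habs, hc, div_le_iff₀ (by linarith)]
  nlinarith [Real.sqrt_nonneg m, Real.sqrt_nonneg n]

private lemma dist_high (n k : ℕ) :
    min (((k : ℕ) : ℝ) / (3 * Real.sqrt (max (n:ℝ) 1))) (Real.sqrt k / 3)
      ≤ Real.sqrt ((n + k : ℕ) : ℝ) - Real.sqrt n := by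
  have hm2 : Real.sqrt ((n+k:ℕ):ℝ) ^ 2 = ((n:ℝ) + k) := by
    rw [Real.sq_sqrt (by positivity)]; push_cast; ring
  have hn2 : Real.sqrt n ^ 2 = (n:ℝ) := Real.sq_sqrt (by positivity)
  have h1N : (1:ℝ) ≤ Real.sqrt (max (n:ℝ) 1) := by
    rw [show (1:ℝ) = Real.sqrt 1 from Real.sqrt_one.symm]
    exact Real.sqrt_le_sqrt (by simp)
  have hsN : Real.sqrt n ≤ Real.sqrt (max (n:ℝ) 1) := Real.sqrt_le_sqrt (le_max_left _ _)
  have hN2 : Real.sqrt (max (n:ℝ) 1) ^ 2 = max (n:ℝ) 1 := Real.sq_sqrt (by positivity)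
  have hnN : (n:ℝ) ≤ Real.sqrt (max (n:ℝ) 1) ^ 2 := by rw [hN2]; exact le_max_left _ _
  rcases le_or_gt k n with hk | hk
  · refine le_trans (min_le_left _ _) ?_
    rw [div_le_iff₀ (by linarith)]
    -- √m ≤ 2 √N since m = n + k ≤ 2n ≤ 2 N ≤ (2 √N)^2
    have hsqm : Real.sqrt ((n+k:ℕ):ℝ) ≤ 2 * Real.sqrt (max (n:ℝ) 1) := by
      nlinarith [Real.sqrt_nonneg ((n+k:ℕ):ℝ), Real.sqrt_nonneg (max (n:ℝ) 1),
        (by exact_mod_cast hk : (k:ℝ) ≤ (n:ℝ))]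
    have hmono : Real.sqrt n ≤ Real.sqrt ((n+k:ℕ):ℝ) := by
      apply Real.sqrt_le_sqrt; push_cast; linarith [Nat.cast_nonneg (α := ℝ) k]
    nlinarith [Real.sqrt_nonneg n, Real.sqrt_nonneg ((n+k:ℕ):ℝ)]
  · refine le_trans (min_le_right _ _) ?_
    have hk2 : Real.sqrt k ^ 2 = (k:ℝ) := Real.sq_sqrt (by positivity)
    have hkpos : (0:ℝ) < k := by exact_mod_cast Nat.pos_of_ne_zero (by omega)
    have hskpos : 0 < Real.sqrt k := Real.sqrt_pos.mpr hkpos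
    have hsqm : Real.sqrt ((n+k:ℕ):ℝ) ≤ 2 * Real.sqrt k := by
      nlinarith [Real.sqrt_nonneg ((n+k:ℕ):ℝ), (by exact_mod_cast hk.le : (n:ℝ) ≤ (k:ℝ))]
    have hsn : Real.sqrt n ≤ Real.sqrt k := Real.sqrt_le_sqrt (by exact_mod_cast hk.le)
    have hmono : Real.sqrt n ≤ Real.sqrt ((n+k:ℕ):ℝ) := by
      apply Real.sqrt_le_sqrt; push_cast; linarith [Nat.cast_nonneg (α := ℝ) k]
    nlinarith [Real.sqrt_nonneg n]

/-- For any μ > 0 and α ∈ ℝ there is a constant C such that for all n,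
∑_{m=0}^∞ (max(m,1))^α · exp(-μ·|√m − √n|) ≤ C · (max(n,1))^{α + 1/2}. -/
theorem stmt0 (μ α : ℝ) (hμ : 0 < μ) :
    ∃ C : ℝ, ∀ n : ℕ,
      (∑' m : ℕ, (max (m : ℝ) 1) ^ α * Real.exp (-μ * |Real.sqrt m - Real.sqrt n|))
        ≤ C * (max (n : ℝ) 1) ^ (α + 1 / 2) := by
  set ν := μ / 2 with hνdef
  have hν : 0 < ν := by positivity
  have hμν : μ = 2 * ν := by rw [hνdef]; ring
  set ε := min 1 (μ / (4 * |α| + 1)) with hεdef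
  have hε0 : 0 < ε := lt_min one_pos (by positivity)
  have hε1 : ε ≤ 1 := min_le_left _ _
  have hεμ : 2 * |α| * ε ≤ ν := by
    have h1 : ε ≤ μ / (4 * |α| + 1) := min_le_right _ _
    have hd : (0:ℝ) < 4 * |α| + 1 := by positivity
    have h2 : ε * (4 * |α| + 1) ≤ μ := by rw [← le_div_iff₀ hd]; exact h1
    nlinarith [abs_nonneg α, mul_nonneg (abs_nonneg α) hε0.le]
  set K := ε ^ (-(2 * |α|)) with hKdef
  have hK0 : 0 < K := Real.rpow_pos_of_pos hε0 _
  have hsum3 : Summable fun k : ℕ => Real.exp (-(ν / 3 * Real.sqrt k)) :=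
    summable_exp_neg_sqrt (by positivity)
  set C3 := ∑' k : ℕ, Real.exp (-(ν / 3 * Real.sqrt k)) with hC3
  have hC30 : 0 ≤ C3 := tsum_nonneg fun k => (Real.exp_pos _).le
  refine ⟨K * (2 * (1 + 3 / ν + C3)), fun n => ?_⟩
  set N := max (n:ℝ) 1 with hNdef
  have hN1 : (1:ℝ) ≤ N := le_max_right _ _
  have hN0 : (0:ℝ) < N := by linarith
  have hsN1 : (1:ℝ) ≤ Real.sqrt N := by
    rw [show (1:ℝ) = Real.sqrt 1 from Real.sqrt_one.symm]; exact Real.sqrt_le_sqrt hN1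
  have hsN0 : (0:ℝ) < Real.sqrt N := by linarith
  set h : ℕ → ℝ := fun m => Real.exp (-(ν * |Real.sqrt m - Real.sqrt n|)) with hh
  set g : ℕ → ℝ := fun m => (max (m : ℝ) 1) ^ α * Real.exp (-μ * |Real.sqrt m - Real.sqrt n|)
    with hg
  have hrwsq : ∀ c : ℝ, 1 ≤ c → ((c ^ 2 : ℝ)) ^ α = c ^ (2 * α) := by
    intro c hc
    rw [← Real.rpow_natCast c 2, ← Real.rpow_mul (by linarith)]
    norm_num
  have point : ∀ m : ℕ, g m ≤ K * N ^ α * h m := by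
    intro m
    set d := |Real.sqrt m - Real.sqrt n| with hdd
    have hd0 : 0 ≤ d := abs_nonneg _
    set a := max (Real.sqrt m) 1 with hadef
    set b := max (Real.sqrt n) 1 with hbdef
    have ha1 : (1:ℝ) ≤ a := le_max_right _ _
    have hb1 : (1:ℝ) ≤ b := le_max_right _ _
    have hab : |a - b| ≤ d := abs_max_sub_max_le_abs _ _ _
    have hax : max (m:ℝ) 1 = a ^ 2 := by
      rw [hadef, ← sqrt_max' (m:ℝ), Real.sq_sqrt (by positivity)]
    have hbx : N = b ^ 2 := by
      rw [hNdef, hbdef, ← sqrt_max' (n:ℝ), Real.sq_sqrt (by positivity)]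
    have hcomp := rpow_comp (α := α) hε0 hε1 ha1 hb1 hab
    have hexp : Real.exp (2 * |α| * ε * d) * Real.exp (-μ * d) ≤ Real.exp (-(ν * d)) := by
      rw [← Real.exp_add]
      apply Real.exp_le_exp.mpr
      have h3 : 2 * |α| * ε * d ≤ ν * d := mul_le_mul_of_nonneg_right hεμ hd0
      nlinarith [h3]
    calc g m = a ^ (2*α) * Real.exp (-μ * d) := by
          simp only [hg, hax, hrwsq a ha1]; rfl
      _ ≤ (ε ^ (-(2 * |α|)) * b ^ (2*α) * Real.exp (2 * |α| * ε * d)) * Real.exp (-μ * d) :=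
          mul_le_mul_of_nonneg_right hcomp (Real.exp_pos _).le
      _ = (ε ^ (-(2 * |α|)) * b ^ (2*α)) *
            (Real.exp (2 * |α| * ε * d) * Real.exp (-μ * d)) := by ring
      _ ≤ (ε ^ (-(2 * |α|)) * b ^ (2*α)) * Real.exp (-(ν * d)) :=
          mul_le_mul_of_nonneg_left hexp (by positivity)
      _ = K * N ^ α * h m := by
          rw [hbx, hrwsq b hb1, hKdef]
  have hsh : Summable h := by
    refine Summable.of_nonneg_of_le
      (f := fun m : ℕ => Real.exp (ν * Real.sqrt n) * Real.exp (-(ν * Real.sqrt m)))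
      (fun m => (Real.exp_pos _).le) (fun m => ?_)
      ((summable_exp_neg_sqrt hν).mul_left _)
    simp only [hh]
    rw [← Real.exp_add]
    apply Real.exp_le_exp.mpr
    have h1 : Real.sqrt m - Real.sqrt n ≤ |Real.sqrt m - Real.sqrt n| := le_abs_self _
    nlinarith [mul_le_mul_of_nonneg_left h1 hν.le]
  have hgnn : ∀ m, 0 ≤ g m := by
    intro m
    simp only [hg]
    positivity
  have hsg : Summable g :=
    Summable.of_nonneg_of_le hgnn point (hsh.mul_left _)
  set r := Real.exp (-(ν / (3 * Real.sqrt N))) with hr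
  have hr0 : (0:ℝ) ≤ r := (Real.exp_pos _).le
  have hr1 : r < 1 := by
    rw [hr, Real.exp_lt_one_iff]
    have : (0:ℝ) < ν / (3 * Real.sqrt N) := by positivity
    linarith
  set G : ℕ → ℝ := fun k => r ^ k + Real.exp (-(ν / 3 * Real.sqrt k)) with hG
  have hG0 : ∀ k, 0 ≤ G k := fun k => add_nonneg (pow_nonneg hr0 _) (Real.exp_pos _).le
  have hsgeo : Summable fun k : ℕ => r ^ k := summable_geometric_of_lt_one hr0 hr1
  have hsG : Summable G := hsgeo.add hsum3
  have hlow : ∀ m : ℕ, m ≤ n → h m ≤ G (n - m) := by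
    intro m hm
    have hd := dist_low n m hm
    have h2 : -(ν * |Real.sqrt m - Real.sqrt n|)
        ≤ -(ν * (((n - m : ℕ):ℝ) / (3 * Real.sqrt N))) := by
      apply neg_le_neg
      exact mul_le_mul_of_nonneg_left hd hν.le
    have h3 : h m ≤ Real.exp (-(ν * (((n - m : ℕ):ℝ) / (3 * Real.sqrt N)))) := by
      simp only [hh]
      exact Real.exp_le_exp.mpr h2
    have h4 : Real.exp (-(ν * (((n - m : ℕ):ℝ) / (3 * Real.sqrt N)))) = r ^ (n - m) := by
      rw [hr, ← Real.exp_nat_mul]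
      congr 1
      field_simp
    calc h m ≤ r ^ (n - m) := h4 ▸ h3
      _ ≤ G (n - m) := le_add_of_nonneg_right (Real.exp_pos _).le
  have hhigh : ∀ k : ℕ, h (n + k) ≤ G k := by
    intro k
    have hd := dist_high n k
    have hmono : Real.sqrt (n:ℝ) ≤ Real.sqrt ((n + k : ℕ):ℝ) := by
      apply Real.sqrt_le_sqrt; push_cast; linarith [Nat.cast_nonneg (α := ℝ) k]
    have habs : |Real.sqrt ((n + k : ℕ):ℝ) - Real.sqrt (n:ℝ)|
        = Real.sqrt ((n + k : ℕ):ℝ) - Real.sqrt (n:ℝ) := abs_of_nonneg (by linarith)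
    rcases min_cases (((k : ℕ) : ℝ) / (3 * Real.sqrt N)) (Real.sqrt (k:ℝ) / 3) with
      ⟨he, _⟩ | ⟨he, _⟩
    · have h2 : h (n + k) ≤ Real.exp (-(ν * ((k:ℝ) / (3 * Real.sqrt N)))) := by
        simp only [hh]
        apply Real.exp_le_exp.mpr
        apply neg_le_neg
        apply mul_le_mul_of_nonneg_left _ hν.le
        rw [habs]
        rw [he] at hd
        exact hd
      have h4 : Real.exp (-(ν * ((k:ℝ) / (3 * Real.sqrt N)))) = r ^ k := by
        rw [hr, ← Real.exp_nat_mul]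
        congr 1
        field_simp
      calc h (n + k) ≤ r ^ k := h4 ▸ h2
        _ ≤ G k := le_add_of_nonneg_right (Real.exp_pos _).le
    · have h2 : h (n + k) ≤ Real.exp (-(ν / 3 * Real.sqrt (k:ℝ))) := by
        simp only [hh]
        apply Real.exp_le_exp.mpr
        apply neg_le_neg
        have h5 : ν * (Real.sqrt (k:ℝ) / 3) ≤ ν * |Real.sqrt ((n+k:ℕ):ℝ) - Real.sqrt (n:ℝ)| := by
          apply mul_le_mul_of_nonneg_left _ hν.le
          rw [habs]
          rw [he] at hd
          exact hd
        calc ν / 3 * Real.sqrt (k:ℝ) = ν * (Real.sqrt (k:ℝ) / 3) := by ring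
          _ ≤ _ := h5
      calc h (n + k) ≤ Real.exp (-(ν / 3 * Real.sqrt (k:ℝ))) := h2
        _ ≤ G k := le_add_of_nonneg_left (pow_nonneg hr0 _)
  have split := ((summable_nat_add_iff (n+1)).mpr hsh).sum_add_tsum_nat_add' (f := h)
  have hfin : ∑ i ∈ Finset.range (n+1), h i ≤ ∑' k, G k := by
    calc ∑ i ∈ Finset.range (n+1), h i ≤ ∑ i ∈ Finset.range (n+1), G (n - i) :=
          Finset.sum_le_sum (fun i hi => hlow i (by
            have := Finset.mem_range.mp hi; omega))
      _ = ∑ i ∈ Finset.range (n+1), G i := by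
          have := Finset.sum_range_reflect (fun j => G j) (n+1)
          simpa using this
      _ ≤ ∑' k, G k := hsG.sum_le_tsum _ (fun k _ => hG0 k)
  have htail : (∑' i, h (i + (n+1))) ≤ ∑' k, G k := by
    have hs1 : Summable fun i => h (i + (n+1)) := (summable_nat_add_iff (n+1)).mpr hsh
    have hs2 : Summable fun i => G (i + 1) := (summable_nat_add_iff 1).mpr hsG
    have step1 : (∑' i, h (i + (n+1))) ≤ ∑' i, G (i + 1) := by
      apply Summable.tsum_le_tsum _ hs1 hs2
      intro i
      have := hhigh (i + 1)
      rw [show n + (i + 1) = i + (n + 1) by ring] at this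
      exact this
    have hsplit1 := ((summable_nat_add_iff 1).mpr hsG).sum_add_tsum_nat_add' (f := G)
    have hone : ∑ i ∈ Finset.range 1, G i = G 0 := by simp
    have : (∑' i, G (i + 1)) ≤ ∑' k, G k := by
      rw [hone] at hsplit1
      linarith [hG0 0]
    linarith
  have htsumG : (∑' k, G k) = (1 - r)⁻¹ + C3 := by
    rw [hG, hsgeo.tsum_add hsum3, tsum_geometric_of_lt_one hr0 hr1, hC3]
  have hsumh : (∑' m, h m) ≤ 2 * ((1 - r)⁻¹ + C3) := by
    rw [← htsumG]
    linarith [split, hfin, htail]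
  have hgeo : (1 - r)⁻¹ ≤ 1 + 3 * Real.sqrt N / ν := by
    have hx : (0:ℝ) < ν / (3 * Real.sqrt N) := by positivity
    have := geom_inv_bound hx
    have hinv : (ν / (3 * Real.sqrt N))⁻¹ = 3 * Real.sqrt N / ν := by
      rw [inv_div]
    rw [hinv] at this
    rw [hr]
    exact this
  have hstep : (1 - r)⁻¹ + C3 ≤ (1 + 3 / ν + C3) * Real.sqrt N := by
    have h1 : 3 * Real.sqrt N / ν = (3 / ν) * Real.sqrt N := by ring
    nlinarith [hgeo, hC30, hsN1, hν, mul_nonneg hC30 (by linarith : (0:ℝ) ≤ Real.sqrt N - 1)]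
  calc (∑' m, g m) ≤ ∑' m, K * N ^ α * h m := Summable.tsum_le_tsum point hsg (hsh.mul_left _)
    _ = K * N ^ α * ∑' m, h m := tsum_mul_left
    _ ≤ K * N ^ α * (2 * ((1 - r)⁻¹ + C3)) :=
        mul_le_mul_of_nonneg_left hsumh (by positivity)
    _ ≤ K * N ^ α * (2 * ((1 + 3 / ν + C3) * Real.sqrt N)) := by
        apply mul_le_mul_of_nonneg_left _ (by positivity)
        linarith [hstep]
    _ = K * (2 * (1 + 3 / ν + C3)) * (N ^ α * Real.sqrt N) := by ring
    _ = K * (2 * (1 + 3 / ν + C3)) * N ^ (α + 1 / 2) := by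
        rw [Real.rpow_add hN0, Real.sqrt_eq_rpow]
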